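/- For all ε, δ ∈ (0,1) there exists an integer N = N(ε, δ) such that for every integer n ≥ N, P( {ω : for every t ∈ [0,1] there exists τ ≥ 0 with |τ − t| ≤ δ and Π(nτ)(ω) = ⌊nt⌋} ) ≥ 1 − ε. -/

import Mathlib

open Filter Topology Real MeasureTheory ProbabilityTheory

lemma aux_unif {u : ℕ → ℝ} (hu : Tendsto (fun m : ℕ => u m / m) atTop (𝓝 1))
    {δ : ℝ} (hδ : 0 < δ) : ∃ k : ℕ, ∀ n : ℕ, k ≤ n → ∀ m ≤ n, |u m - m| ≤ n * δ - 1 := by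
  have h0 : Tendsto (fun m : ℕ => |u m / m - 1|) atTop (𝓝 0) := by
    have := (hu.sub_const 1).abs
    simpa using this
  have h2 : ∀ᶠ m : ℕ in atTop, |u m / m - 1| ≤ δ / 2 :=
    h0.eventually_le_const (by linarith)
  obtain ⟨M, hM⟩ := eventually_atTop.1 (h2.and (eventually_ge_atTop 1))
  obtain ⟨K, hK0, hK⟩ : ∃ K : ℝ, 0 ≤ K ∧ ∀ m < M, |u m - m| ≤ K := by
    refine ⟨((Finset.range M).sup fun m => ⌈|u m - (m : ℝ)|⌉₊ : ℕ), Nat.cast_nonneg _, ?_⟩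
    intro m hm
    refine (Nat.le_ceil _).trans ?_
    exact_mod_cast Nat.cast_le.2 (Finset.le_sup (f := fun m => ⌈|u m - (m : ℝ)|⌉₊)
      (Finset.mem_range.2 hm))
  refine ⟨M + ⌈(K + 2) / δ⌉₊, fun n hn m hm => ?_⟩
  have hnδ : K + 2 ≤ (n : ℝ) * δ := by
    have h1 : ((K + 2) / δ) ≤ (⌈(K + 2) / δ⌉₊ : ℝ) := Nat.le_ceil _
    have h2 : (⌈(K + 2) / δ⌉₊ : ℝ) ≤ (n : ℝ) := by
      exact_mod_cast le_trans (Nat.le_add_left _ M) hn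
    calc K + 2 = ((K + 2) / δ) * δ := by field_simp
    _ ≤ (n : ℝ) * δ := by
      apply mul_le_mul_of_nonneg_right (h1.trans h2) hδ.le
  rcases lt_or_ge m M with hmM | hmM
  · have := hK m hmM
    linarith
  · have h3 := (hM m hmM).1
    have hm1 : (1 : ℝ) ≤ (m : ℝ) := by exact_mod_cast (hM m hmM).2
    have hmpos : (0 : ℝ) < m := by linarith
    have key : u m - m = (u m / m - 1) * m := by field_simp
    have h4 : |u m - m| ≤ δ / 2 * m := by
      rw [key, abs_mul, abs_of_pos hmpos]
      exact mul_le_mul_of_nonneg_right h3 hmpos.le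
    have hmn : (m : ℝ) ≤ n := by exact_mod_cast hm
    nlinarith

lemma aux_pdf_mul (x : ℝ) :
    exponentialPDF 1 x * ENNReal.ofReal x
      = ENNReal.ofReal ((Set.Ioi (0:ℝ)).indicator (fun y => rexp (-y) * y) x) := by
  rcases le_or_gt x 0 with hx | hx
  · rcases lt_or_eq_of_le hx with hx' | hx'
    · rw [exponentialPDF_of_neg hx', Set.indicator_of_notMem (by simpa using hx.not_gt)]
      simp
    · subst hx'
      rw [Set.indicator_of_notMem (by simp)]
      simp
  · rw [exponentialPDF_of_nonneg hx.le, Set.indicator_of_mem (Set.mem_Ioi.2 hx),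
      ← ENNReal.ofReal_mul (by positivity)]
    congr 1
    ring

lemma aux_g_integrable :
    Integrable ((Set.Ioi (0:ℝ)).indicator (fun y => rexp (-y) * y)) := by
  rw [integrable_indicator_iff measurableSet_Ioi]
  have h := Real.GammaIntegral_convergent (s := 2) (by norm_num)
  have : ∀ x : ℝ, rexp (-x) * x ^ ((2:ℝ) - 1) = rexp (-x) * x := by
    intro x; norm_num
  simpa [this] using h

lemma aux_g_integral :
    ∫ x, (Set.Ioi (0:ℝ)).indicator (fun y => rexp (-y) * y) x = 1 := by
  rw [MeasureTheory.integral_indicator measurableSet_Ioi]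
  have h := Real.Gamma_eq_integral (s := 2) (by norm_num)
  rw [Real.Gamma_two] at h
  have heq : ∀ x : ℝ, rexp (-x) * x ^ ((2:ℝ) - 1) = rexp (-x) * x := by
    intro x; norm_num
  simp_rw [heq] at h
  exact h.symm

lemma aux_lintegral :
    ∫⁻ x, exponentialPDF 1 x * ENNReal.ofReal x = 1 := by
  simp_rw [aux_pdf_mul]
  rw [← ofReal_integral_eq_lintegral_ofReal aux_g_integrable]
  · rw [aux_g_integral]; simp
  · refine Filter.Eventually.of_forall fun x => ?_
    rcases le_or_gt x 0 with hx | hx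
    · rw [Set.indicator_of_notMem (by simpa using hx.not_gt)]; simp
    · rw [Set.indicator_of_mem (Set.mem_Ioi.2 hx)]
      have : (0:ℝ→ℝ) x = 0 := rfl
      rw [this]; positivity

lemma aux_expMeasure_eq : expMeasure 1 = volume.withDensity (exponentialPDF 1) := rfl

lemma aux_pdf_meas : Measurable (exponentialPDF 1) :=
  (measurable_exponentialPDFReal 1).ennreal_ofReal

lemma aux_Iio_zero : expMeasure 1 (Set.Iio 0) = 0 := by
  rw [aux_expMeasure_eq, withDensity_apply _ measurableSet_Iio]
  exact lintegral_exponentialPDF_of_nonpos le_rfl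

lemma aux_lintegral_id : ∫⁻ x, ENNReal.ofReal x ∂(expMeasure 1) = 1 := by
  rw [aux_expMeasure_eq, lintegral_withDensity_eq_lintegral_mul _ aux_pdf_meas
    ENNReal.measurable_ofReal]
  simpa [Pi.mul_apply] using aux_lintegral

lemma aux_ae_nonneg : 0 ≤ᵐ[expMeasure 1] (id : ℝ → ℝ) := by
  rw [EventuallyLE, ae_iff]
  have : {x : ℝ | ¬ (0:ℝ→ℝ) x ≤ id x} = Set.Iio 0 := by
    ext x; simp [not_le]
  rw [this]
  exact aux_Iio_zero

lemma aux_integrable_id : Integrable (id : ℝ → ℝ) (expMeasure 1) := by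
  refine ⟨aestronglyMeasurable_id, ?_⟩
  rw [hasFiniteIntegral_iff_norm, aux_expMeasure_eq]
  have h1 := lintegral_withDensity_eq_lintegral_mul (μ := volume) aux_pdf_meas
      (g := fun a : ℝ => ENNReal.ofReal ‖id a‖) (by simp only [id_eq]; exact measurable_norm.ennreal_ofReal)
  rw [h1]
  have h2 : (exponentialPDF 1 * fun a : ℝ => ENNReal.ofReal ‖id a‖)
      = fun a : ℝ => exponentialPDF 1 a * ENNReal.ofReal a := by
    funext x
    rcases lt_or_ge x 0 with hx | hx
    · simp [Pi.mul_apply, exponentialPDF_of_neg hx]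
    · simp [Pi.mul_apply, Real.norm_of_nonneg hx, abs_of_nonneg hx]
  rw [h2, aux_lintegral]
  exact ENNReal.one_lt_top

lemma aux_integral_id : ∫ x, x ∂(expMeasure 1) = 1 := by
  have : ∫ x, x ∂(expMeasure 1) = ∫ x, id x ∂(expMeasure 1) := rfl
  rw [this, integral_eq_lintegral_of_nonneg_ae aux_ae_nonneg aestronglyMeasurable_id]
  simp only [id]
  rw [aux_lintegral_id]
  simp

lemma aux_map_eq {Ω : Type*} [MeasurableSpace Ω] (P : Measure Ω) [IsProbabilityMeasure P]
    {f : Ω → ℝ} (hf : Measurable f)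
    (hcdf : ∀ x : ℝ, 0 ≤ x → (P {ω | f ω ≤ x}).toReal = 1 - rexp (-x)) :
    P.map f = expMeasure 1 := by
  have hexpP : IsProbabilityMeasure (expMeasure 1) := isProbabilityMeasure_expMeasure one_pos
  have hmapP : IsProbabilityMeasure (P.map f) := Measure.isProbabilityMeasure_map hf.aemeasurable
  refine Measure.ext_of_Iic _ _ fun a => ?_
  have hmap : P.map f (Set.Iic a) = P {ω | f ω ≤ a} := by
    rw [Measure.map_apply hf measurableSet_Iic]
    rfl
  have hexp : (expMeasure 1 (Set.Iic a)).toReal = if 0 ≤ a then 1 - rexp (-a) else 0 := by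
    have h := cdf_expMeasure_eq (r := 1) one_pos a
    rw [cdf_eq_real, measureReal_def] at h
    simpa using h
  rcases le_or_gt 0 a with ha | ha
  · refine (ENNReal.toReal_eq_toReal_iff' (measure_ne_top _ _) (measure_ne_top _ _)).1 ?_
    rw [hmap, hcdf a ha, hexp, if_pos ha]
  · have h1 : P {ω | f ω ≤ a} = 0 := by
      have h0 : P {ω | f ω ≤ 0} = 0 := by
        have := hcdf 0 le_rfl
        simp only [neg_zero, Real.exp_zero, sub_self] at this
        rcases (ENNReal.toReal_eq_zero_iff _).1 this with h | h
        · exact h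
        · exact absurd h (measure_ne_top _ _)
      exact measure_mono_null (fun ω hω => le_trans hω ha.le) h0
    have h2 : expMeasure 1 (Set.Iic a) = 0 :=
      measure_mono_null (fun x hx => lt_of_le_of_lt hx ha) aux_Iio_zero
    rw [hmap, h1, h2]


/-- Lemma 2.2: if `Π` is the unit-rate Poisson counting process built from i.i.d.
standard exponential interarrival times, then for all `ε, δ ∈ (0,1)` there exists `N` such
that for all `n ≥ N`, with probability at least `1 − ε`, for every `t ∈ [0,1]` there is a
`τ ≥ 0` with `|τ − t| ≤ δ` and `Π(nτ) = ⌊nt⌋`. -/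
theorem poisson_time_change_approximation
    {Ω : Type*} [MeasurableSpace Ω] (P : Measure Ω) [IsProbabilityMeasure P]
    (E : ℕ → Ω → ℝ) (hE_meas : ∀ j, Measurable (E j))
    (hE_indep : iIndepFun E P)
    (hE_exp : ∀ j, ∀ x : ℝ, 0 ≤ x →
      (P {ω | E j ω ≤ x}).toReal = 1 - Real.exp (-x))
    (T : ℕ → Ω → ℝ) (hT : ∀ m ω, T m ω = ∑ j ∈ Finset.range m, E j ω)
    (Pi : ℝ → Ω → ℕ) (hPi : ∀ s ω, Pi s ω = sSup {m : ℕ | T m ω ≤ s}) :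
    ∀ ε ∈ Set.Ioo (0 : ℝ) 1, ∀ δ ∈ Set.Ioo (0 : ℝ) 1, ∃ N : ℕ, ∀ n : ℕ, N ≤ n →
      1 - ε ≤ (P {ω | ∀ t ∈ Set.Icc (0 : ℝ) 1, ∃ τ : ℝ, 0 ≤ τ ∧ |τ - t| ≤ δ ∧
        Pi ((n : ℝ) * τ) ω = ⌊(n : ℝ) * t⌋₊}).toReal := by
  -- identification of the law of each `E j`
  have hmap : ∀ j, P.map (E j) = expMeasure 1 :=
    fun j => aux_map_eq P (hE_meas j) (fun x hx => hE_exp j x hx)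
  have hident : ∀ i, IdentDistrib (E i) (E 0) P P :=
    fun i => ⟨(hE_meas i).aemeasurable, (hE_meas 0).aemeasurable, by rw [hmap i, hmap 0]⟩
  have hint : Integrable (E 0) P := by
    have h1 : Integrable id (P.map (E 0)) := by rw [hmap 0]; exact aux_integrable_id
    have h2 := (integrable_map_measure aestronglyMeasurable_id
      (hE_meas 0).aemeasurable).1 h1
    simpa [Function.comp] using h2
  have hmean : P[E 0] = 1 := by
    have h1 : ∫ x, id x ∂(P.map (E 0)) = ∫ ω, id (E 0 ω) ∂P :=
      integral_map (hE_meas 0).aemeasurable aestronglyMeasurable_id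
    simp only [id_eq] at h1
    rw [hmap 0, aux_integral_id] at h1
    exact h1.symm
  have hSLLN := strong_law_ae E hint (fun i j hij => hE_indep.indepFun hij) hident
  rw [hmean] at hSLLN
  have hSLLN' : ∀ᵐ ω ∂P, Tendsto (fun m : ℕ => T m ω / m) atTop (𝓝 1) := by
    filter_upwards [hSLLN] with ω hω
    have : (fun m : ℕ => T m ω / m) = fun m : ℕ => (m : ℝ)⁻¹ • ∑ i ∈ Finset.range m, E i ω := by
      funext m
      rw [hT m ω, smul_eq_mul, inv_mul_eq_div]
    rw [this]
    exact hω
  have hTmeas : ∀ m, Measurable (T m) := by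
    intro m
    have : T m = fun ω => ∑ j ∈ Finset.range m, E j ω := funext (hT m)
    rw [this]
    exact Finset.measurable_sum _ fun j _ => hE_meas j
  intro ε hε δ hδ
  set F : ℕ → Set Ω := fun k => ⋂ n, ⋂ (_ : k ≤ n), ⋂ m, ⋂ (_ : m ≤ n),
    {ω | |T m ω - (m : ℝ)| ≤ (n : ℝ) * δ - 1} with hF
  have hFmem : ∀ k ω, ω ∈ F k ↔ ∀ n : ℕ, k ≤ n → ∀ m : ℕ, m ≤ n →
      |T m ω - (m : ℝ)| ≤ (n : ℝ) * δ - 1 := by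
    intro k ω
    simp [hF, Set.mem_iInter, Set.mem_setOf_eq]
  have hFmeas : ∀ k, MeasurableSet (F k) := by
    intro k
    refine MeasurableSet.iInter fun n => MeasurableSet.iInter fun _ =>
      MeasurableSet.iInter fun m => MeasurableSet.iInter fun _ => ?_
    exact measurableSet_le ((hTmeas m).sub measurable_const).abs measurable_const
  have hFmono : Monotone F := by
    intro k k' hkk' ω hω
    rw [hFmem] at hω ⊢
    exact fun n hn m hm => hω n (hkk'.trans hn) m hm
  have hsubae : ∀ᵐ ω ∂P, ω ∈ ⋃ k, F k := by
    filter_upwards [hSLLN'] with ω hω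
    obtain ⟨k, hk⟩ := aux_unif hω hδ.1
    exact Set.mem_iUnion.2 ⟨k, (hFmem k ω).2 fun n hn m hm => hk n hn m hm⟩
  have hP1 : P (⋃ k, F k) = 1 := by
    have h0 : P ((⋃ k, F k)ᶜ) = 0 := ae_iff.1 hsubae
    have h := measure_add_measure_compl (μ := P) (MeasurableSet.iUnion hFmeas)
    rw [h0, add_zero, measure_univ] at h
    exact h
  have htend : Tendsto (fun k => (P (F k)).toReal) atTop (𝓝 1) := by
    have h1 := tendsto_measure_iUnion_atTop (μ := P) hFmono
    rw [hP1] at h1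
    have h2 := (ENNReal.tendsto_toReal ENNReal.one_ne_top).comp h1
    simpa [Function.comp_def] using h2
  have hev : ∀ᶠ k in atTop, 1 - ε < (P (F k)).toReal :=
    htend.eventually (eventually_gt_nhds (by linarith [hε.1]))
  obtain ⟨k₀, hk₀⟩ := hev.exists
  set A : Set Ω := {ω | ∀ j, 0 < E j ω} with hA
  have hAc : P Aᶜ = 0 := by
    have : Aᶜ = ⋃ j, {ω | E j ω ≤ 0} := by
      ext ω; simp [hA, not_lt]
    rw [this]
    refine measure_iUnion_null fun j => ?_
    have := hE_exp j 0 le_rfl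
    simp only [neg_zero, Real.exp_zero, sub_self] at this
    rcases (ENNReal.toReal_eq_zero_iff _).1 this with h | h
    · exact h
    · exact absurd h (measure_ne_top _ _)
  refine ⟨k₀, fun n hn => ?_⟩
  -- the deterministic part: on `A ∩ F k₀` the conclusion holds
  have hsub2 : A ∩ F k₀ ⊆ {ω | ∀ t ∈ Set.Icc (0 : ℝ) 1, ∃ τ : ℝ, 0 ≤ τ ∧ |τ - t| ≤ δ ∧
      Pi ((n : ℝ) * τ) ω = ⌊(n : ℝ) * t⌋₊} := by
    rintro ω ⟨hAω, hFω⟩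
    have h2 : ∀ m : ℕ, m ≤ n → |T m ω - (m : ℝ)| ≤ (n : ℝ) * δ - 1 :=
      fun m hm => (hFmem k₀ ω).1 hFω n hn m hm
    have T0 : T 0 ω = 0 := by rw [hT]; simp
    have hnδ : 1 ≤ (n : ℝ) * δ := by
      have := h2 0 (Nat.zero_le n)
      rw [T0] at this
      simp at this
      linarith
    have hnpos : (0 : ℝ) < n := by
      have hn0 : (0 : ℝ) ≤ n := Nat.cast_nonneg n
      nlinarith [hδ.2.le]
    have hmono : StrictMono fun m => T m ω := by
      refine strictMono_nat_of_lt_succ fun m => ?_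
      have hpos := hAω m
      rw [hT (m + 1), hT m, Finset.sum_range_succ]
      linarith
    have hTnonneg : ∀ m, 0 ≤ T m ω := fun m => by
      have := hmono.monotone (Nat.zero_le m)
      simpa [T0] using this
    intro t ht
    set m := ⌊(n : ℝ) * t⌋₊ with hm
    have hnt0 : 0 ≤ (n : ℝ) * t := mul_nonneg hnpos.le ht.1
    have hmn : m ≤ n := by
      have h3 : (n : ℝ) * t ≤ ((n : ℕ) : ℝ) := by nlinarith [ht.2]
      calc m ≤ ⌊((n : ℕ) : ℝ)⌋₊ := Nat.floor_le_floor h3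
      _ = n := Nat.floor_natCast n
    have hfl1 : (m : ℝ) ≤ (n : ℝ) * t := Nat.floor_le hnt0
    have hfl2 : (n : ℝ) * t < (m : ℝ) + 1 := Nat.lt_floor_add_one _
    have hTb := h2 m hmn
    rw [abs_le] at hTb
    refine ⟨T m ω / n, div_nonneg (hTnonneg m) hnpos.le, ?_, ?_⟩
    · have heq : T m ω / n - t = (T m ω - n * t) / n := by field_simp
      rw [heq, abs_div, abs_of_pos hnpos, div_le_iff₀ hnpos]
      rw [abs_le]
      constructor <;> nlinarith
    · have heq : (n : ℝ) * (T m ω / n) = T m ω := by field_simp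
      rw [heq, hPi]
      have hset : {m' : ℕ | T m' ω ≤ T m ω} = Set.Iic m := by
        ext m'
        simpa using hmono.le_iff_le (a := m') (b := m)
      rw [hset, csSup_Iic]
  have hle1 : P (F k₀) ≤ P (A ∩ F k₀) := by
    have h4 := measure_le_inter_add_diff P (F k₀) A
    have h5 : P (F k₀ \ A) = 0 := measure_mono_null (fun ω hω => hω.2) hAc
    rw [h5, add_zero] at h4
    rw [Set.inter_comm]
    exact h4
  have hle2 := (hle1.trans (measure_mono hsub2))
  have := ENNReal.toReal_mono (measure_ne_top P _) hle2
  linarith [hk₀]
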